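/- Let n ≥ 1 and let z be a real symmetric n×n matrix. Then 1ₙ + z² is positive definite; let h be its (unique) symmetric positive definite square root, so h² = 1ₙ + z², and h commutes with z. Then the following factorization holds in M_{2n}(ℝ): [[1ₙ, 0], [z, 1ₙ]] = k · [[h, 0], [0, h⁻¹]] · [[1ₙ, h⁻¹·z·h⁻¹], [0, 1ₙ]], where k := [[h⁻¹, −h⁻¹·z], [h⁻¹·z, h⁻¹]]; moreover k ∈ Sp_{2n}(ℝ) ∩ O(2n). -/

import Mathlib

open Matrix

/-- `Jₙ = [[0, -1ₙ], [1ₙ, 0]]`. -/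
def JJ (n : ℕ) : Matrix (Fin n ⊕ Fin n) (Fin n ⊕ Fin n) ℝ :=
  Matrix.fromBlocks 0 (-1) 1 0

/-- The real symplectic group `Sp_{2n}(ℝ) = {g : ᵗg·Jₙ·g = Jₙ}`. -/
def SpSet (n : ℕ) : Set (Matrix (Fin n ⊕ Fin n) (Fin n ⊕ Fin n) ℝ) :=
  {g | gᵀ * JJ n * g = JJ n}

lemma posDef_of_sq {m : Type*} [Fintype m] [DecidableEq m] {h P : Matrix m m ℝ}
    (hh : h.PosSemidef) (hP : P.PosDef) (he : h * h = P) : h.PosDef := by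
  refine posDef_iff_dotProduct_mulVec.mpr ⟨hh.1, fun x hx => ?_⟩
  rcases ((posSemidef_iff_dotProduct_mulVec.mp hh).2 x).lt_or_eq with hlt | heq0
  · exact hlt
  · exfalso
    have h0 : h *ᵥ x = 0 := (hh.dotProduct_mulVec_zero_iff x).mp heq0.symm
    have hPx : P *ᵥ x = 0 := by rw [← he, ← mulVec_mulVec, h0, mulVec_zero]
    have := hP.dotProduct_mulVec_pos hx
    rw [hPx, dotProduct_zero] at this
    exact lt_irrefl 0 this

theorem stmt15 (n : ℕ) (hn : 1 ≤ n) (z : Matrix (Fin n) (Fin n) ℝ) (hz : z.IsSymm) :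
    (1 + z * z).PosDef ∧
    (∃! h : Matrix (Fin n) (Fin n) ℝ, h.PosDef ∧ h * h = 1 + z * z) ∧
    ∀ h : Matrix (Fin n) (Fin n) ℝ, h.PosDef → h * h = 1 + z * z →
      h * z = z * h ∧
      Matrix.fromBlocks 1 0 z 1 =
        Matrix.fromBlocks h⁻¹ (-(h⁻¹ * z)) (h⁻¹ * z) h⁻¹ *
          Matrix.fromBlocks h 0 0 h⁻¹ *
          Matrix.fromBlocks 1 (h⁻¹ * z * h⁻¹) 0 1 ∧
      Matrix.fromBlocks h⁻¹ (-(h⁻¹ * z)) (h⁻¹ * z) h⁻¹ ∈ SpSet n ∧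
      (Matrix.fromBlocks h⁻¹ (-(h⁻¹ * z)) (h⁻¹ * z) h⁻¹)ᵀ *
        Matrix.fromBlocks h⁻¹ (-(h⁻¹ * z)) (h⁻¹ * z) h⁻¹ = 1 := by
  classical
  have hzH : z.IsHermitian := by rwa [Matrix.IsHermitian, conjTranspose_eq_transpose_of_trivial]
  -- positive definiteness of 1 + z²
  have hzz : (z * z).PosSemidef := by
    have := posSemidef_conjTranspose_mul_self z
    rwa [hzH.eq] at this
  have hPD : (1 + z * z).PosDef := Matrix.PosDef.one.add_posSemidef hzz
  -- spectral data of z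
  set U : Matrix (Fin n) (Fin n) ℝ := (hzH.eigenvectorUnitary : Matrix (Fin n) (Fin n) ℝ) with hUdef
  set ev : Fin n → ℝ := hzH.eigenvalues with hevdef
  have hUU : U * star U = 1 := (Matrix.mem_unitaryGroup_iff).mp hzH.eigenvectorUnitary.2
  have hUU' : star U * U = 1 := (Matrix.mem_unitaryGroup_iff').mp hzH.eigenvectorUnitary.2
  have zdecomp : z = U * diagonal ev * star U := by
    have := hzH.spectral_theorem
    simpa [RCLike.ofReal_real_eq_id] using this
  have mulconj : ∀ a b : Fin n → ℝ,
      (U * diagonal a * star U) * (U * diagonal b * star U)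
        = U * diagonal (fun i => a i * b i) * star U := by
    intro a b
    simp only [mul_assoc]
    rw [← mul_assoc (star U) U, hUU', one_mul,
      ← mul_assoc (diagonal a) (diagonal b), diagonal_mul_diagonal]
  set d : Fin n → ℝ := fun i => Real.sqrt (1 + ev i * ev i) with hddef
  have hdpos : ∀ i, 0 < d i := fun i => Real.sqrt_pos.mpr (by nlinarith [mul_self_nonneg (ev i)])
  set h₀ : Matrix (Fin n) (Fin n) ℝ := U * diagonal d * star U with hh₀def
  have h₀psd : h₀.PosSemidef := by
    rw [hh₀def, star_eq_conjTranspose]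
    exact (posSemidef_diagonal_iff.mpr fun i => (hdpos i).le).mul_mul_conjTranspose_same U
  have hzz' : z * z = U * diagonal (fun i => ev i * ev i) * star U := by
    conv_lhs => rw [zdecomp]
    exact mulconj ev ev
  have h₀sq : h₀ * h₀ = 1 + z * z := by
    rw [hh₀def, mulconj]
    have hdd : (fun i => d i * d i) = fun i => 1 + ev i * ev i := by
      funext i
      exact Real.mul_self_sqrt (by nlinarith [mul_self_nonneg (ev i)])
    rw [hdd, hzz']
    have : diagonal (fun i : Fin n => 1 + ev i * ev i)
        = (1 : Matrix (Fin n) (Fin n) ℝ) + diagonal (fun i => ev i * ev i) := by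
      rw [← diagonal_one, ← diagonal_add]
    rw [this, mul_add, add_mul, mul_one, hUU]
  have h₀pd : h₀.PosDef := posDef_of_sq h₀psd hPD h₀sq
  have h₀comm : h₀ * z = z * h₀ := by
    conv_lhs => rw [hh₀def, zdecomp, mulconj]
    conv_rhs => rw [hh₀def, zdecomp, mulconj]
    have hde : (fun i => d i * ev i) = fun i => ev i * d i := by
      funext i; ring
    rw [hde]
  have uniq : ∀ h : Matrix (Fin n) (Fin n) ℝ, h.PosDef → h * h = 1 + z * z → h = h₀ := by
    intro h hPDh hsq
    open MatrixOrder in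
    have e1 : h = CFC.sqrt (1 + z * z) := (CFC.sqrt_unique hsq hPDh.posSemidef.nonneg).symm
    open MatrixOrder in
    have e2 : h₀ = CFC.sqrt (1 + z * z) := (CFC.sqrt_unique h₀sq h₀psd.nonneg).symm
    rw [e1, e2]
  refine ⟨hPD, ⟨h₀, ⟨h₀pd, h₀sq⟩, fun y hy => uniq y hy.1 hy.2⟩, ?_⟩
  intro h hPDh hsq
  have hcomm : h * z = z * h := by
    rw [uniq h hPDh hsq]; rw [h₀comm]
  have hdet : IsUnit h.det := Matrix.isUnit_iff_isUnit_det h |>.mp hPDh.isUnit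
  have hinv : h⁻¹ * h = 1 := nonsing_inv_mul h hdet
  have hinv' : h * h⁻¹ = 1 := mul_nonsing_inv h hdet
  have hsymm : hᵀ = h := by
    have := hPDh.1
    rwa [Matrix.IsHermitian, conjTranspose_eq_transpose_of_trivial] at this
  have hinvT : h⁻¹ᵀ = h⁻¹ := by rw [transpose_nonsing_inv, hsymm]
  have hcomm' : h⁻¹ * z = z * h⁻¹ := by
    calc h⁻¹ * z = h⁻¹ * z * (h * h⁻¹) := by rw [hinv', mul_one]
    _ = h⁻¹ * (z * h) * h⁻¹ := by simp only [mul_assoc]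
    _ = h⁻¹ * (h * z) * h⁻¹ := by rw [← hcomm]
    _ = (h⁻¹ * h) * (z * h⁻¹) := by simp only [mul_assoc]
    _ = z * h⁻¹ := by rw [hinv, one_mul]
  -- key algebra facts
  have e1 : h⁻¹ * h⁻¹ + (h⁻¹ * z) * (h⁻¹ * z) = 1 := by
    have : (h⁻¹ * z) * (h⁻¹ * z) = h⁻¹ * h⁻¹ * (z * z) := by
      calc (h⁻¹ * z) * (h⁻¹ * z) = h⁻¹ * (z * h⁻¹) * z := by simp only [mul_assoc]
      _ = h⁻¹ * (h⁻¹ * z) * z := by rw [← hcomm']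
      _ = h⁻¹ * h⁻¹ * (z * z) := by simp only [mul_assoc]
    rw [this]
    calc h⁻¹ * h⁻¹ + h⁻¹ * h⁻¹ * (z * z)
        = h⁻¹ * h⁻¹ * (1 + z * z) := by rw [mul_add, mul_one]
      _ = h⁻¹ * h⁻¹ * (h * h) := by rw [hsq]
      _ = h⁻¹ * (h⁻¹ * h) * h := by simp only [mul_assoc]
      _ = 1 := by rw [hinv, mul_one, hinv]
  have hT : (h⁻¹ * z)ᵀ = h⁻¹ * z := by
    rw [transpose_mul, hinvT, hz.eq, ← hcomm']
  have f0 : (h⁻¹ * z) * h⁻¹ = h⁻¹ * (h⁻¹ * z) := by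
    rw [mul_assoc, ← hcomm']
  have key0 : h⁻¹ * z * h = z := by
    rw [mul_assoc, ← hcomm, ← mul_assoc, hinv, one_mul]
  have key1 : z * (h⁻¹ * z * h⁻¹) + h⁻¹ * h⁻¹ = 1 := by
    have e3 : z * (h⁻¹ * z * h⁻¹) = (h⁻¹ * z) * (h⁻¹ * z) := by
      rw [f0, ← mul_assoc, ← hcomm']
    rw [e3, add_comm]; exact e1
  refine ⟨hcomm, ?_, ?_, ?_⟩
  · rw [fromBlocks_multiply, fromBlocks_multiply, fromBlocks_inj]
    refine ⟨?_, ?_, ?_, ?_⟩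
    · simp [hinv]
    · simp [hinv, neg_mul]
    · simp [key0]
    · simp only [mul_zero, zero_add, add_zero, mul_one, key0, key1]
  · show _ * JJ n * _ = JJ n
    rw [JJ, fromBlocks_transpose, fromBlocks_multiply, fromBlocks_multiply, fromBlocks_inj]
    refine ⟨?_, ?_, ?_, ?_⟩
    · simp [hT, hinvT, f0]
    · simp only [hT, hinvT, mul_zero, zero_mul, zero_add, add_zero, mul_one, one_mul,
        mul_neg, neg_mul, neg_neg]
      rw [← neg_add, add_comm, e1]
    · simp only [transpose_neg, hT, hinvT, mul_zero, zero_mul, zero_add, add_zero,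
        mul_one, one_mul, mul_neg, neg_mul, neg_neg]
      exact e1
    · simp [transpose_neg, hT, hinvT, f0]
  · rw [fromBlocks_transpose, fromBlocks_multiply, ← fromBlocks_one (m := Fin n)]
    rw [fromBlocks_inj]
    refine ⟨?_, ?_, ?_, ?_⟩
    · simp only [transpose_neg, hT, hinvT, mul_neg, neg_mul, neg_neg]
      exact e1
    · simp [transpose_neg, hT, hinvT, f0]
    · simp [transpose_neg, hT, hinvT, f0]
    · simp only [transpose_neg, hT, hinvT, mul_neg, neg_mul, neg_neg]
      rw [add_comm]; exact e1
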